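/- arXiv:1311.7245 — 3 statements merged into one kernel-verified Lean document; each statement's English description precedes it below -/
import Mathlib

section
/- Let G be a finite directed graph on vertex set {1,...,N} with nonnegative real vertex weights r_i. For a permutation π of {1,...,N}, define r̃_{π_i} = r_{π_i} if π_i is not an out-neighbor of any π_j with j ≤ i, and r̃_{π_i} = 0 otherwise. Then max over permutations π of ∑_{i=1}^N r̃_{π_i} equals the maximum, over all vertex subsets S whose induced subgraph is acyclic, of ∑_{i∈S} r_i (the Maximum Weighted Acyclic Induced Subgraph). -/
/-- `S` contains a directed cycle of the relation `E` (all vertices in `S`). -/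
def HasCycleOn {V : Type*} (E : V → V → Prop) (S : Finset V) : Prop :=
  ∃ (v : V) (l : List V), v ∈ S ∧ (∀ u ∈ l, u ∈ S) ∧ List.Chain E v l ∧
    E ((v :: l).getLast (List.cons_ne_nil v l)) v

namespace MwaisAux

variable {N : ℕ} (E : Fin N → Fin N → Prop)

lemma cycle_mono {S T : Finset (Fin N)} (hST : S ⊆ T) (h : HasCycleOn E S) :
    HasCycleOn E T := by
  obtain ⟨v, l, hv, hl, hc, he⟩ := h
  exact ⟨v, l, hST hv, fun u hu => hST (hl u hu), hc, he⟩

lemma transGen_path (S : Finset (Fin N)) {a b : Fin N}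
    (h : Relation.TransGen (fun x y => E y x ∧ x ∈ S ∧ y ∈ S) a b) :
    a ∈ S ∧ b ∈ S ∧ ∃ l : List (Fin N), (∀ u ∈ l, u ∈ S) ∧ List.Chain E b l ∧
      E ((b :: l).getLast (List.cons_ne_nil b l)) a := by
  induction h with
  | single h => exact ⟨h.2.1, h.2.2, [], by simp, List.Chain.nil, h.1⟩
  | tail h1 hbc ih =>
      obtain ⟨haS, hbS, l, hl, hch, hlast⟩ := ih
      refine ⟨haS, hbc.2.2, _ :: l, ?_, List.Chain.cons hbc.1 hch, ?_⟩
      · intro u hu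
        rcases List.mem_cons.mp hu with rfl | hu
        · exact hbS
        · exact hl u hu
      · rw [List.getLast_cons (List.cons_ne_nil _ _)]
        exact hlast

lemma exists_topo (S : Finset (Fin N)) (h : ¬ HasCycleOn E S) :
    ∃ l : List (Fin N), l.Nodup ∧ l.toFinset = S ∧
      ∀ (i j : ℕ) (hi : i < l.length) (hj : j < l.length), i ≤ j → ¬ E l[i] l[j] := by
  induction S using Finset.strongInduction with
  | _ S ih =>
    rcases S.eq_empty_or_nonempty with rfl | hne
    · exact ⟨[], by simp, by simp, by simp⟩
    · set R : Fin N → Fin N → Prop := fun x y => E y x ∧ x ∈ S ∧ y ∈ S with hR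
      have hirr : ∀ a, ¬ Relation.TransGen R a a := by
        intro a ha
        obtain ⟨haS, _, l, hl, hch, hlast⟩ := transGen_path E S ha
        exact h ⟨a, l, haS, hl, hch, hlast⟩
      haveI : IsTrans (Fin N) (Relation.TransGen R) := ⟨fun _ _ _ => Relation.TransGen.trans⟩
      haveI : IsIrrefl (Fin N) (Relation.TransGen R) := ⟨hirr⟩
      have wfT := Finite.wellFounded_of_trans_of_irrefl (Relation.TransGen R)
      have wfR : WellFounded R := Subrelation.wf (fun h => Relation.TransGen.single h) wfT
      obtain ⟨v, hvS, hmin⟩ := wfR.has_min ↑S (by exact_mod_cast hne)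
      have hsink : ∀ x ∈ S, ¬ E v x := fun x hx hE => hmin x hx ⟨hE, hx, hvS⟩
      obtain ⟨l', hnd, htf, hprop⟩ := ih (S.erase v) (Finset.erase_ssubset hvS)
        (fun hc => h (cycle_mono E (Finset.erase_subset _ _) hc))
      have hmemS : ∀ u ∈ v :: l', u ∈ S := by
        intro u hu
        rcases List.mem_cons.mp hu with rfl | hu
        · exact hvS
        · exact Finset.mem_of_mem_erase (htf ▸ List.mem_toFinset.mpr hu)
      refine ⟨v :: l', ?_, ?_, ?_⟩
      · refine List.nodup_cons.mpr ⟨?_, hnd⟩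
        intro hv
        exact Finset.notMem_erase v S (htf ▸ List.mem_toFinset.mpr hv)
      · rw [List.toFinset_cons, htf, Finset.insert_erase hvS]
      · intro i j hi hj hij
        match i, j with
        | 0, j =>
            simp only [List.getElem_cons_zero]
            exact hsink _ (hmemS _ (List.getElem_mem hj))
        | i + 1, j + 1 =>
            simp only [List.getElem_cons_succ]
            exact hprop i j (by simpa using hi) (by simpa using hj) (by omega)


end MwaisAux

open MwaisAux in
theorem stmt_1 (N : ℕ) (hN : 1 ≤ N) (E : Fin N → Fin N → Prop) [DecidableRel E]
    (r : Fin N → ℝ) (hr : ∀ i, 0 ≤ r i) :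
    IsGreatest {x : ℝ | ∃ S : Finset (Fin N), ¬ HasCycleOn E S ∧ x = ∑ i ∈ S, r i}
      (Finset.univ.sup' Finset.univ_nonempty
        (fun π : Equiv.Perm (Fin N) =>
          ∑ i : Fin N, if ∀ j, j ≤ i → ¬ E (π j) (π i) then r (π i) else 0)) := by
  constructor
  · -- membership: the sup is achieved by some π₀ and corresponds to an acyclic set
    obtain ⟨π₀, -, hsup⟩ := Finset.exists_mem_eq_sup' (Finset.univ_nonempty)
      (fun π : Equiv.Perm (Fin N) =>
        ∑ i : Fin N, if ∀ j, j ≤ i → ¬ E (π j) (π i) then r (π i) else 0)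
    set c : Fin N → Prop := fun i => ∀ j, j ≤ i → ¬ E (π₀ j) (π₀ i) with hc
    set S₀ : Finset (Fin N) := (Finset.univ.filter c).image π₀ with hS₀
    have key : ∀ u w, w ∈ S₀ → E u w → π₀.symm w < π₀.symm u := by
      intro u w hw hE
      obtain ⟨j, hj, rfl⟩ := Finset.mem_image.mp hw
      have hcj : c j := (Finset.mem_filter.mp hj).2
      have : ¬ π₀.symm u ≤ j := fun hle => hcj (π₀.symm u) hle (by simpa using hE)
      simpa using not_le.mp this
    refine ⟨S₀, ?_, ?_⟩
    · rintro ⟨v, l, hv, hl, hch, he⟩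
      have desc : ∀ (v : Fin N) (l : List (Fin N)), (∀ u ∈ l, u ∈ S₀) →
          List.Chain E v l → π₀.symm ((v :: l).getLast (List.cons_ne_nil v l)) ≤ π₀.symm v := by
        intro v l
        induction l generalizing v with
        | nil => intro _ _; simp
        | cons a t ihl =>
            intro hmem hch
            rcases List.chain_cons.mp hch with ⟨hva, hat⟩
            have h1 := ihl a (fun u hu => hmem u (List.mem_cons_of_mem _ hu)) hat
            have h2 := key v a (hmem a (List.mem_cons_self)) hva
            calc π₀.symm ((v :: a :: t).getLast (List.cons_ne_nil _ _))
                = π₀.symm ((a :: t).getLast (List.cons_ne_nil _ _)) := by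
                  rw [List.getLast_cons (List.cons_ne_nil _ _)]
              _ ≤ π₀.symm a := h1
              _ ≤ π₀.symm v := le_of_lt h2
      have h1 := desc v l hl hch
      have h2 := key _ v hv he
      exact absurd (lt_of_le_of_lt h1 h2) (lt_irrefl _)
    · rw [hsup]
      rw [Finset.sum_image (fun a _ b _ h => π₀.injective h)]
      rw [Finset.sum_filter]
  · -- upper bound
    rintro x ⟨S, hS, rfl⟩
    obtain ⟨l, hnd, htf, hprop⟩ := exists_topo E S hS
    -- build the full list and permutation
    set rest : List (Fin N) := (Finset.univ \ S).sort (· ≤ ·) with hrest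
    set m : List (Fin N) := l ++ rest with hm
    have hdisj : l.Disjoint rest := by
      intro a ha hb
      have h1 : a ∈ S := htf ▸ List.mem_toFinset.mpr ha
      have h2 : a ∈ Finset.univ \ S := (Finset.mem_sort _).mp hb
      exact (Finset.mem_sdiff.mp h2).2 h1
    have hnodm : m.Nodup := List.nodup_append.mpr ⟨hnd, Finset.sort_nodup _ _, fun a ha b hb hab => hdisj ha (hab ▸ hb)⟩
    have htfm : m.toFinset = Finset.univ := by
      rw [hm, List.toFinset_append, htf, Finset.sort_toFinset]
      exact Finset.union_sdiff_of_subset (Finset.subset_univ S)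
    have hlen : m.length = N := by
      have h1 := List.toFinset_card_of_nodup hnodm
      rw [htfm, Finset.card_univ, Fintype.card_fin] at h1
      omega
    have hll : l.length ≤ N := by
      have : l.length ≤ m.length := by simp [hm]
      omega
    have hfi : ∀ i : Fin N, (i : ℕ) < m.length := fun i => by rw [hlen]; exact i.isLt
    set f : Fin N → Fin N := fun i => m[(i : ℕ)]'(hfi i) with hf
    have hinj : Function.Injective f := by
      intro i j hij
      have := List.nodup_iff_injective_get.mp hnodm
        (show m.get ⟨i, hfi i⟩ = m.get ⟨j, hfi j⟩ by simpa [hf] using hij)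
      exact Fin.ext (by simpa using congrArg Fin.val this)
    set π : Equiv.Perm (Fin N) := Equiv.ofBijective f (Finite.injective_iff_bijective.mp hinj)
      with hπ
    have hπapp : ∀ i : Fin N, π i = f i := fun i => rfl
    have hπl : ∀ (i : Fin N) (hi : (i : ℕ) < l.length), π i = l[(i : ℕ)] := by
      intro i hi
      rw [hπapp, hf]
      exact List.getElem_append_left hi
    have hcond : ∀ (i : Fin N), (i : ℕ) < l.length → ∀ j, j ≤ i → ¬ E (π j) (π i) := by
      intro i hi j hj
      have hjl : (j : ℕ) < l.length := lt_of_le_of_lt hj hi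
      rw [hπl i hi, hπl j hjl]
      exact hprop j i hjl hi hj
    have hSsum : ∑ i ∈ S, r i =
        ∑ i ∈ Finset.univ.filter (fun i : Fin N => (i : ℕ) < l.length), r (π i) := by
      have hSim : S = (Finset.univ.filter (fun i : Fin N => (i : ℕ) < l.length)).image π := by
        ext a
        simp only [Finset.mem_image, Finset.mem_filter, Finset.mem_univ, true_and]
        constructor
        · intro ha
          obtain ⟨k, hk, hka⟩ := List.mem_iff_getElem.mp (List.mem_toFinset.mp (htf ▸ ha))
          exact ⟨⟨k, lt_of_lt_of_le hk hll⟩, hk, by rw [hπl _ hk]; exact hka⟩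
        · rintro ⟨i, hi, rfl⟩
          rw [hπl i hi]
          exact htf ▸ List.mem_toFinset.mpr (List.getElem_mem _)
      rw [hSim, Finset.sum_image (fun a _ b _ h => π.injective h)]
    calc ∑ i ∈ S, r i
        = ∑ i : Fin N, if (i : ℕ) < l.length then r (π i) else 0 := by
          rw [hSsum, Finset.sum_filter]
      _ ≤ ∑ i : Fin N, if ∀ j, j ≤ i → ¬ E (π j) (π i) then r (π i) else 0 := by
          apply Finset.sum_le_sum
          intro i _
          by_cases hi : (i : ℕ) < l.length
          · rw [if_pos hi, if_pos (hcond i hi)]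
          · rw [if_neg hi]
            split <;> [exact hr _; exact le_refl 0]
      _ ≤ _ := Finset.le_sup' (f := fun π : Equiv.Perm (Fin N) =>
          ∑ i : Fin N, if ∀ j, j ≤ i → ¬ E (π j) (π i) then r (π i) else 0)
          (Finset.mem_univ π)
end

section
/- Let T : ℕ^N → ℝ≥0 be subadditive (T(l+m) ≤ T(l) + T(m) for all l,m ∈ ℕ^N) with T(0) = 0 and T finite. Then for any r ∈ (ℝ≥0)^N, the limit T̂(r) = lim_{n→∞} T(⌈n·r⌉)/n exists, is finite, and T̂ is positively homogeneous: T̂(ρr) = ρ·T̂(r) for all ρ ≥ 0. -/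
open Filter Topology

namespace Stmt6

variable {N : ℕ} (T : (Fin N → ℕ) → ℝ)

noncomputable def bnd (M : Fin N → ℕ) : ℝ :=
  (Finset.Iic M).sup' ⟨0, Finset.mem_Iic.mpr (fun _ => Nat.zero_le _)⟩ T

lemma le_bnd (M c : Fin N → ℕ) (hc : c ≤ M) : T c ≤ bnd T M :=
  Finset.le_sup' T (Finset.mem_Iic.mpr hc)

lemma floor_superadd {a b : ℝ} (ha : 0 ≤ a) (hb : 0 ≤ b) :
    ⌊a⌋₊ + ⌊b⌋₊ ≤ ⌊a + b⌋₊ := by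
  apply Nat.le_floor
  push_cast
  exact add_le_add (Nat.floor_le ha) (Nat.floor_le hb)

lemma floor_subadd {a b : ℝ} (ha : 0 ≤ a) (hb : 0 ≤ b) :
    ⌊a + b⌋₊ ≤ ⌊a⌋₊ + ⌈b⌉₊ := by
  have h1 : a < ⌊a⌋₊ + 1 := Nat.lt_floor_add_one a
  have h2 : b ≤ ⌈b⌉₊ := Nat.le_ceil b
  have : ⌊a + b⌋₊ < ⌊a⌋₊ + ⌈b⌉₊ + 1 := by
    rw [Nat.floor_lt (by linarith)]
    push_cast
    linarith
  omega

lemma master (hT0 : T 0 = 0) (hTnonneg : ∀ k, 0 ≤ T k)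
    (hsub : ∀ l m : Fin N → ℕ, T (l + m) ≤ T l + T m)
    (r : Fin N → ℝ) (hr : ∀ i, 0 ≤ r i) :
    ∃ L, 0 ≤ L ∧ ∀ s : ℕ → ℝ, Tendsto s atTop atTop →
      Tendsto (fun k => T (fun i => ⌈s k * r i⌉₊) / s k) atTop (𝓝 L) := by
  classical
  set m₀ : ℕ := (Finset.univ.sup fun i : Fin N => ⌈(r i)⁻¹⌉₊) + 1 with hm₀def
  have hm₀ : ∀ i, 0 < r i → (1 : ℝ) ≤ (m₀ : ℝ) * r i := by
    intro i hi
    have h1 : ⌈(r i)⁻¹⌉₊ ≤ m₀ := by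
      rw [hm₀def]
      exact Nat.le_succ_of_le (Finset.le_sup (f := fun i => ⌈(r i)⁻¹⌉₊) (Finset.mem_univ i))
    have h2 : (r i)⁻¹ ≤ (m₀ : ℝ) := le_trans (Nat.le_ceil _) (by exact_mod_cast h1)
    calc (1:ℝ) = (r i)⁻¹ * r i := (inv_mul_cancel₀ hi.ne').symm
    _ ≤ (m₀ : ℝ) * r i := mul_le_mul_of_nonneg_right h2 hi.le
  set Mb : Fin N → ℕ := fun i => ⌈((m₀:ℝ) + 1) * r i⌉₊ + ⌈r i⌉₊ + 1 with hMbdef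
  set C : ℝ := bnd T Mb with hCdef
  have hC0 : 0 ≤ C := hT0 ▸ le_bnd T Mb 0 (fun i => Nat.zero_le _)
  have key : ∀ a b : Fin N → ℕ, (∀ i, a i ≤ b i ∧ b i ≤ a i + Mb i) →
      T b ≤ T a + C := by
    intro a b hab
    have hb : b = a + fun i => b i - a i := by
      funext i; have := hab i; simp only [Pi.add_apply]; omega
    rw [hb]
    refine le_trans (hsub _ _) (add_le_add le_rfl ?_)
    exact le_bnd T Mb _ (fun i => by have := hab i; dsimp; omega)
  set v : ℕ → Fin N → ℕ := fun n i => ⌊(n:ℝ) * r i⌋₊ with hvdef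
  have hvsub : Subadditive (fun n => T (v n) + C) := by
    intro n m
    show T (v (n + m)) + C ≤ (T (v n) + C) + (T (v m) + C)
    have h1 : T (v (n + m)) ≤ T (v n + v m) + C := by
      apply key
      intro i
      have hnx : (0:ℝ) ≤ (n:ℝ) * r i := mul_nonneg (Nat.cast_nonneg n) (hr i)
      have hmx : (0:ℝ) ≤ (m:ℝ) * r i := mul_nonneg (Nat.cast_nonneg m) (hr i)
      have hcast : ((n + m : ℕ) : ℝ) * r i = (n:ℝ) * r i + (m:ℝ) * r i := by
        push_cast; ring
      constructor
      · show v n i + v m i ≤ v (n + m) i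
        simp only [hvdef, hcast]
        exact floor_superadd hnx hmx
      · show v (n + m) i ≤ (v n + v m) i + Mb i
        have h3 := floor_subadd hnx hmx
        have h2 : ⌈(m:ℝ) * r i⌉₊ ≤ ⌊(m:ℝ) * r i⌋₊ + 1 := Nat.ceil_le_floor_add_one _
        simp only [hvdef, hcast, Pi.add_apply, hMbdef]
        omega
    have h2 : T (v n + v m) ≤ T (v n) + T (v m) := hsub _ _
    linarith
  have hbdd : BddBelow (Set.range fun n : ℕ => (T (v n) + C) / n) := by
    refine ⟨0, ?_⟩
    rintro x ⟨n, rfl⟩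
    exact div_nonneg (by have := hTnonneg (v n); linarith) (Nat.cast_nonneg n)
  set L : ℝ := hvsub.lim with hLdef
  have hL : Tendsto (fun n : ℕ => (T (v n) + C) / n) atTop (𝓝 L) :=
    hvsub.tendsto_lim hbdd
  have hP : Tendsto (fun n : ℕ => T (v n) / n) atTop (𝓝 L) := by
    have h0 : Tendsto (fun n : ℕ => C / n) atTop (𝓝 0) :=
      tendsto_const_div_atTop_nhds_zero_nat C
    have h1 := hL.sub h0
    rw [sub_zero] at h1
    refine h1.congr (fun n => ?_)
    rw [← sub_div]; ring_nf
  have hL0 : 0 ≤ L :=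
    ge_of_tendsto' hP fun n => div_nonneg (hTnonneg _) (Nat.cast_nonneg _)
  refine ⟨L, hL0, ?_⟩
  intro s hs
  have hs1 : ∀ᶠ k in atTop, 1 ≤ s k := hs.eventually_ge_atTop 1
  have hcomp : ∀ (χ : ℕ → ℕ) (B : ℝ), (∀ᶠ k in atTop, |(χ k : ℝ) - s k| ≤ B) →
      Tendsto (fun k => T (v (χ k)) / s k) atTop (𝓝 L) := by
    intro χ B hB
    have hχcast : Tendsto (fun k => (χ k : ℝ)) atTop atTop := by
      apply tendsto_atTop_mono' _ _ (tendsto_atTop_add_const_right atTop (-B) hs)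
      filter_upwards [hB] with k hk
      have h2 := (abs_le.mp hk).2
      linarith [(abs_le.mp hk).1]
    have hχ : Tendsto χ atTop atTop := tendsto_natCast_atTop_iff.mp hχcast
    have h1 : Tendsto (fun k => T (v (χ k)) / (χ k : ℝ)) atTop (𝓝 L) := hP.comp hχ
    have hratio : Tendsto (fun k => (χ k : ℝ) / s k) atTop (𝓝 1) := by
      have h0 : Tendsto (fun k => ((χ k : ℝ) - s k) / s k) atTop (𝓝 0) := by
        refine squeeze_zero_norm' ?_ ((tendsto_const_nhds : Tendsto (fun _ : ℕ => B) atTop (𝓝 B)).div_atTop hs)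
        filter_upwards [hB, hs1] with k hk hk1
        have hsk : (0:ℝ) < s k := by linarith
        rw [norm_div, Real.norm_eq_abs, Real.norm_eq_abs, abs_of_pos hsk]
        exact div_le_div_of_nonneg_right hk hsk.le
      have h0' := h0.add_const 1
      rw [zero_add] at h0'
      refine h0'.congr' ?_
      filter_upwards [hs1] with k hk
      have hne : s k ≠ 0 := by linarith
      field_simp
      ring
    have hmul := h1.mul hratio
    rw [mul_one] at hmul
    refine hmul.congr' ?_
    filter_upwards [hs1, hχ.eventually_gt_atTop 0] with k hk hχk
    have h1' : (χ k : ℝ) ≠ 0 := (Nat.cast_pos.mpr hχk).ne'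
    have h2' : s k ≠ 0 := by linarith
    field_simp
  set w : ℕ → Fin N → ℕ := fun k i => ⌈s k * r i⌉₊ with hwdef
  set φ : ℕ → ℕ := fun k => ⌊s k⌋₊ with hφdef
  set ψ : ℕ → ℕ := fun k => ⌊s k⌋₊ + 1 + m₀ with hψdef
  have hψr : ∀ k, ((ψ k : ℕ) : ℝ) = (⌊s k⌋₊ : ℝ) + 1 + (m₀ : ℝ) := by
    intro k; simp only [hψdef]; push_cast; ring
  have hupper : ∀ᶠ k in atTop, T (w k) ≤ T (v (φ k)) + C := by
    filter_upwards [hs1] with k hk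
    apply key
    intro i
    have hx := hr i
    have ht0 : (0:ℝ) ≤ s k := by linarith
    have hn1 : ((φ k : ℕ) : ℝ) ≤ s k := Nat.floor_le ht0
    have hn2 : s k < (φ k : ℝ) + 1 := Nat.lt_floor_add_one _
    constructor
    · show ⌊(φ k : ℝ) * r i⌋₊ ≤ ⌈s k * r i⌉₊
      calc ⌊(φ k : ℝ) * r i⌋₊ ≤ ⌊s k * r i⌋₊ :=
            Nat.floor_le_floor (mul_le_mul_of_nonneg_right hn1 hx)
        _ ≤ ⌈s k * r i⌉₊ := Nat.floor_le_ceil _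
    · show ⌈s k * r i⌉₊ ≤ ⌊(φ k : ℝ) * r i⌋₊ + (⌈((m₀:ℝ) + 1) * r i⌉₊ + ⌈r i⌉₊ + 1)
      have c1 : ⌈s k * r i⌉₊ ≤ ⌈((φ k : ℝ) + 1) * r i⌉₊ :=
        Nat.ceil_le_ceil (mul_le_mul_of_nonneg_right hn2.le hx)
      have heq : ((φ k : ℝ) + 1) * r i = (φ k : ℝ) * r i + r i := by ring
      rw [heq] at c1
      have c2 : ⌈(φ k : ℝ) * r i + r i⌉₊ ≤ ⌈(φ k : ℝ) * r i⌉₊ + ⌈r i⌉₊ :=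
        Nat.ceil_add_le _ _
      have c3 : ⌈(φ k : ℝ) * r i⌉₊ ≤ ⌊(φ k : ℝ) * r i⌋₊ + 1 :=
        Nat.ceil_le_floor_add_one _
      omega
  have hlower : ∀ᶠ k in atTop, T (v (ψ k)) ≤ T (w k) + C := by
    filter_upwards [hs1] with k hk
    apply key
    intro i
    have hx := hr i
    have ht0 : (0:ℝ) ≤ s k := by linarith
    have hn1 : ((φ k : ℕ) : ℝ) ≤ s k := Nat.floor_le ht0
    have hn2 : s k < (φ k : ℝ) + 1 := Nat.lt_floor_add_one _
    rcases eq_or_lt_of_le hx with hx0 | hx0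
    · constructor <;> simp [hwdef, hvdef, ← hx0]
    · constructor
      · show ⌈s k * r i⌉₊ ≤ ⌊(ψ k : ℝ) * r i⌋₊
        have f0 : ⌈s k * r i⌉₊ ≤ ⌊s k * r i⌋₊ + 1 := Nat.ceil_le_floor_add_one _
        have f1 : 1 ≤ ⌊(m₀:ℝ) * r i⌋₊ := by
          apply Nat.le_floor
          exact_mod_cast hm₀ i hx0
        have f2 : ⌊s k * r i⌋₊ + ⌊(m₀:ℝ) * r i⌋₊ ≤ ⌊s k * r i + (m₀:ℝ) * r i⌋₊ :=
          floor_superadd (mul_nonneg ht0 hx) (mul_nonneg (Nat.cast_nonneg _) hx)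
        have f3 : ⌊s k * r i + (m₀:ℝ) * r i⌋₊ ≤ ⌊(ψ k : ℝ) * r i⌋₊ := by
          apply Nat.floor_le_floor
          rw [hψr k]
          nlinarith
        omega
      · show ⌊(ψ k : ℝ) * r i⌋₊ ≤ ⌈s k * r i⌉₊ + (⌈((m₀:ℝ) + 1) * r i⌉₊ + ⌈r i⌉₊ + 1)
        have g1 : ⌊(ψ k : ℝ) * r i⌋₊ ≤ ⌊s k * r i + ((m₀:ℝ) + 1) * r i⌋₊ := by
          apply Nat.floor_le_floor
          rw [hψr k]
          nlinarith
        have g2 : ⌊s k * r i + ((m₀:ℝ) + 1) * r i⌋₊ ≤ ⌊s k * r i⌋₊ + ⌈((m₀:ℝ) + 1) * r i⌉₊ :=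
          floor_subadd (mul_nonneg ht0 hx) (mul_nonneg (by positivity) hx)
        have g3 : ⌊s k * r i⌋₊ ≤ ⌈s k * r i⌉₊ := Nat.floor_le_ceil _
        omega
  have hφB : ∀ᶠ k in atTop, |(φ k : ℝ) - s k| ≤ 1 := by
    filter_upwards [hs1] with k hk
    have ht0 : (0:ℝ) ≤ s k := by linarith
    have hn1 : ((φ k : ℕ) : ℝ) ≤ s k := Nat.floor_le ht0
    have hn2 : s k < (φ k : ℝ) + 1 := Nat.lt_floor_add_one _
    rw [abs_le]
    constructor <;> linarith
  have hψB : ∀ᶠ k in atTop, |(ψ k : ℝ) - s k| ≤ (m₀ : ℝ) + 2 := by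
    filter_upwards [hs1] with k hk
    have ht0 : (0:ℝ) ≤ s k := by linarith
    have hn1 : ((φ k : ℕ) : ℝ) ≤ s k := Nat.floor_le ht0
    have hn2 : s k < (φ k : ℝ) + 1 := Nat.lt_floor_add_one _
    rw [hψr k, abs_le]
    constructor <;> [skip; skip] <;>
      · simp only [hφdef] at hn1 hn2 ⊢
        linarith
  have hup := (hcomp φ 1 hφB).add ((tendsto_const_nhds : Tendsto (fun _ : ℕ => C) atTop (𝓝 C)).div_atTop hs)
  rw [add_zero] at hup
  have hlo := (hcomp ψ ((m₀ : ℝ) + 2) hψB).sub ((tendsto_const_nhds : Tendsto (fun _ : ℕ => C) atTop (𝓝 C)).div_atTop hs)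
  rw [sub_zero] at hlo
  apply tendsto_of_tendsto_of_tendsto_of_le_of_le' hlo hup
  · filter_upwards [hlower, hs1] with k h1 hk
    have hsk : (0:ℝ) < s k := by linarith
    show T (v (ψ k)) / s k - C / s k ≤ T (w k) / s k
    rw [← sub_div]
    exact div_le_div_of_nonneg_right (by linarith) hsk.le
  · filter_upwards [hupper, hs1] with k h1 hk
    have hsk : (0:ℝ) < s k := by linarith
    show T (w k) / s k ≤ T (v (φ k)) / s k + C / s k
    rw [← add_div]
    exact div_le_div_of_nonneg_right h1 hsk.le

end Stmt6

theorem stmt_6 (N : ℕ) (T : (Fin N → ℕ) → ℝ)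
    (hT0 : T 0 = 0) (hTnonneg : ∀ k, 0 ≤ T k)
    (hsub : ∀ l m : Fin N → ℕ, T (l + m) ≤ T l + T m) :
    ∃ That : (Fin N → ℝ) → ℝ,
      (∀ r : Fin N → ℝ, (∀ i, 0 ≤ r i) →
        Filter.Tendsto (fun n : ℕ => T (fun i => ⌈(n : ℝ) * r i⌉₊) / n)
          Filter.atTop (nhds (That r))) ∧
      (∀ r : Fin N → ℝ, (∀ i, 0 ≤ r i) → 0 ≤ That r) ∧
      (∀ r : Fin N → ℝ, (∀ i, 0 ≤ r i) → ∀ ρ : ℝ, 0 ≤ ρ →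
        That (ρ • r) = ρ * That r) := by
  classical
  have key := Stmt6.master T hT0 hTnonneg hsub
  set That : (Fin N → ℝ) → ℝ :=
    fun r => limUnder atTop (fun n : ℕ => T (fun i => ⌈(n : ℝ) * r i⌉₊) / n) with hThat
  have main : ∀ r : Fin N → ℝ, (∀ i, 0 ≤ r i) → 0 ≤ That r ∧
      Tendsto (fun n : ℕ => T (fun i => ⌈(n : ℝ) * r i⌉₊) / n) atTop (𝓝 (That r)) := by
    intro r hr
    obtain ⟨L, hL0, hconv⟩ := key r hr
    have h1 : Tendsto (fun n : ℕ => T (fun i => ⌈(n : ℝ) * r i⌉₊) / n) atTop (𝓝 L) :=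
      hconv (fun n : ℕ => (n : ℝ)) tendsto_natCast_atTop_atTop
    have h2 : That r = L := h1.limUnder_eq
    rw [h2]; exact ⟨hL0, h1⟩
  refine ⟨That, fun r hr => (main r hr).2, fun r hr => (main r hr).1, ?_⟩
  intro r hr ρ hρ
  rcases eq_or_lt_of_le hρ with hρ0 | hρ0
  · have hz : ∀ n : ℕ, T (fun i => ⌈(n : ℝ) * ((ρ • r) i)⌉₊) / n = 0 := by
      intro n
      have hfun : (fun i => ⌈(n : ℝ) * ((ρ • r) i)⌉₊) = (0 : Fin N → ℕ) := by
        funext i; simp [← hρ0]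
      rw [hfun, hT0, zero_div]
    have hten : Tendsto (fun n : ℕ => T (fun i => ⌈(n : ℝ) * ((ρ • r) i)⌉₊) / n)
        atTop (𝓝 0) := by
      simp only [hz]; exact tendsto_const_nhds
    have h2 : That (ρ • r) = 0 := hten.limUnder_eq
    rw [h2, ← hρ0, zero_mul]
  · have hr' : ∀ i, 0 ≤ (ρ • r) i := fun i => mul_nonneg hρ (hr i)
    obtain ⟨L, hL0, hconv⟩ := key r hr
    have hThatr : That r = L :=
      (hconv (fun n : ℕ => (n : ℝ)) tendsto_natCast_atTop_atTop).limUnder_eq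
    have hsρ : Tendsto (fun n : ℕ => (n : ℝ) * ρ) atTop atTop :=
      Tendsto.atTop_mul_const hρ0 tendsto_natCast_atTop_atTop
    have h1 := hconv _ hsρ
    have h2 : Tendsto (fun k : ℕ => T (fun i => ⌈(k : ℝ) * ((ρ • r) i)⌉₊) / k)
        atTop (𝓝 (ρ * L)) := by
      have h3 := h1.const_mul ρ
      refine h3.congr' ?_
      filter_upwards [eventually_ge_atTop 1] with k hk
      have hkpos : (0:ℝ) < (k:ℝ) := by
        exact_mod_cast Nat.lt_of_lt_of_le Nat.zero_lt_one hk
      have harg : (fun i => ⌈((k:ℝ) * ρ) * r i⌉₊) = fun i => ⌈(k : ℝ) * ((ρ • r) i)⌉₊ := by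
        funext i; rw [Pi.smul_apply, smul_eq_mul, mul_assoc]
      rw [← harg]
      field_simp
    have h4 := (main _ hr').2
    have h5 := tendsto_nhds_unique h4 h2
    rw [h5, hThatr]
end

section
/- Let π be any permutation of {1,...,N} and let G be a directed graph on {1,...,N}. Define S_π = { π_i : π_i is not an out-neighbor of any π_j with j ≤ i }. Then the subgraph of G induced by S_π is acyclic. -/
theorem stmt_18 (N : ℕ) (E : Fin N → Fin N → Prop) [DecidableRel E]
    (π : Equiv.Perm (Fin N)) :
    ¬ HasCycleOn E
      ((Finset.univ.filter (fun i : Fin N => ∀ j, j ≤ i → ¬ E (π j) (π i))).image π) := by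
  rintro ⟨v, l, hv, hl, hchain, hlast⟩
  set c : List (Fin N) := v :: l with hc
  have hlen : 0 < c.length := by simp [hc]
  have hmem : ∀ w ∈ c, ∀ j, j ≤ π.symm w → ¬ E (π j) w := by
    intro w hw
    have hwS : w ∈ (Finset.univ.filter
        (fun i : Fin N => ∀ j, j ≤ i → ¬ E (π j) (π i))).image π := by
      rcases List.mem_cons.mp hw with h | h
      · exact h ▸ hv
      · exact hl w h
    obtain ⟨i, hi, hiw⟩ := Finset.mem_image.mp hwS
    have hi' := (Finset.mem_filter.mp hi).2
    have : π.symm w = i := by rw [← hiw]; simp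
    rw [this, ← hiw]
    exact hi'
  have hchain' : List.Chain' E c := hchain
  obtain ⟨k, -, hk⟩ := Finset.exists_max_image (Finset.univ : Finset (Fin c.length))
    (fun k => π.symm (c.get k)) ⟨⟨0, hlen⟩, Finset.mem_univ _⟩
  set w : Fin N := c.get k with hw
  have hwc : w ∈ c := by simpa only [Fin.eta] using List.get_mem c k
  -- find a predecessor u ∈ c with E u w
  have : ∃ u ∈ c, E u w := by
    rcases Nat.eq_zero_or_pos k.val with h0 | hpos
    · refine ⟨c.getLast (by simp [hc]), List.getLast_mem _, ?_⟩
      have : w = v := by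
        rw [hw]
        have : k = ⟨0, hlen⟩ := by ext; exact h0
        rw [this]; rfl
      rw [this]
      exact hlast
    · obtain ⟨m, hm⟩ := Nat.exists_eq_succ_of_ne_zero (Nat.pos_iff_ne_zero.mp hpos)
      have hmlt : m < c.length - 1 := by omega
      refine ⟨c.get ⟨m, by omega⟩, List.get_mem _ _, ?_⟩
      have := List.isChain_iff_getElem.mp hchain' m (by omega)
      have hkm : k = ⟨m + 1, by omega⟩ := by ext; exact hm
      have h2 : c.get k = c.get ⟨m + 1, by omega⟩ := congrArg c.get hkm
      rw [hw, h2]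
      exact this
  obtain ⟨u, huc, hE⟩ := this
  obtain ⟨k', hk'⟩ := List.get_of_mem huc
  have hle : π.symm u ≤ π.symm w := by
    have := hk k' (Finset.mem_univ _)
    rw [hk'] at this
    exact this
  exact hmem w hwc (π.symm u) hle (by simpa using hE)
end
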